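/- arXiv:1004.2775 — 4 statements merged into one kernel-verified Lean document; each statement's English description precedes it below -/
import Mathlib

section
/- Let $n \ge 1$ and let $c \in \mathbb{R}^n$ satisfy $0 < |c| < \sqrt{2}$. Then there exist constants $k_1, k_2 > 0$ such that for every Schwartz function $u : \mathbb{R}^n \to \mathbb{R}$, $$k_1 \int_{\mathbb{R}^n} \bigl((\Delta u)^2 + |\nabla u|^2 + u^2\bigr)\,dx \;\le\; \int_{\mathbb{R}^n} \bigl((\Delta u)^2 - (c\cdot\nabla u)^2 + u^2\bigr)\,dx \;\le\; k_2 \int_{\mathbb{R}^n} \bigl((\Delta u)^2 + |\nabla u|^2 + u^2\bigr)\,dx.$$ -/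
open MeasureTheory

/-- The Laplacian of `u : ℝⁿ → ℝ` at a point, as the sum of second partial derivatives. -/
noncomputable def laplacian {n : ℕ} (u : EuclideanSpace ℝ (Fin n) → ℝ)
    (x : EuclideanSpace ℝ (Fin n)) : ℝ :=
  ∑ i : Fin n,
    fderiv ℝ (fun y => fderiv ℝ u y (EuclideanSpace.single i 1)) x (EuclideanSpace.single i 1)

/-- The directional derivative `c ⋅ ∇u` at a point. -/
noncomputable def cGrad {n : ℕ} (c : EuclideanSpace ℝ (Fin n))
    (u : EuclideanSpace ℝ (Fin n) → ℝ) (x : EuclideanSpace ℝ (Fin n)) : ℝ :=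
  ∑ i : Fin n, c i * fderiv ℝ u x (EuclideanSpace.single i 1)

/-- The squared norm of the gradient `|∇u|²` at a point. -/
noncomputable def gradSq {n : ℕ} (u : EuclideanSpace ℝ (Fin n) → ℝ)
    (x : EuclideanSpace ℝ (Fin n)) : ℝ :=
  ∑ i : Fin n, (fderiv ℝ u x (EuclideanSpace.single i 1)) ^ 2

lemma schwartz_mul_integrable {n : ℕ} (f g : SchwartzMap (EuclideanSpace ℝ (Fin n)) ℝ) :
    Integrable (fun x => f x * g x) volume :=
  g.integrable.bdd_mul f.continuous.aestronglyMeasurable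
    (Filter.Eventually.of_forall fun x => f.norm_le_seminorm ℝ x)

lemma schwartz_sum_apply {n : ℕ} {ι : Type*} (t : Finset ι)
    (f : ι → SchwartzMap (EuclideanSpace ℝ (Fin n)) ℝ) (x : EuclideanSpace ℝ (Fin n)) :
    (∑ i ∈ t, f i) x = ∑ i ∈ t, f i x := by
  have h := map_sum (SchwartzMap.coeHom (SchwartzMap (EuclideanSpace ℝ (Fin n)) ℝ) (EuclideanSpace ℝ (Fin n)) ℝ) f t
  calc (∑ i ∈ t, f i) x = (∑ i ∈ t, ⇑(f i)) x := by
        exact congrFun h x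
    _ = ∑ i ∈ t, f i x := Finset.sum_apply x t _

set_option maxHeartbeats 1000000 in
theorem stmt_1 (n : ℕ) (hn : 1 ≤ n) (c : EuclideanSpace ℝ (Fin n))
    (hc0 : 0 < ‖c‖) (hc2 : ‖c‖ < Real.sqrt 2) :
    ∃ k₁ k₂ : ℝ, 0 < k₁ ∧ 0 < k₂ ∧
      ∀ u : SchwartzMap (EuclideanSpace ℝ (Fin n)) ℝ,
        k₁ * ∫ x, ((laplacian u x) ^ 2 + gradSq u x + (u x) ^ 2) ≤
            ∫ x, ((laplacian u x) ^ 2 - (cGrad c u x) ^ 2 + (u x) ^ 2) ∧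
          ∫ x, ((laplacian u x) ^ 2 - (cGrad c u x) ^ 2 + (u x) ^ 2) ≤
            k₂ * ∫ x, ((laplacian u x) ^ 2 + gradSq u x + (u x) ^ 2) := by
  set s : ℝ := ‖c‖ ^ 2 with hs
  have hs0 : 0 ≤ s := sq_nonneg _
  have hs2 : s < 2 := by
    have h := Real.sq_sqrt (by norm_num : (0:ℝ) ≤ 2)
    nlinarith [Real.sqrt_nonneg 2]
  refine ⟨(2 - s) / 3, 1, by linarith, one_pos, fun u => ?_⟩
  set e : Fin n → EuclideanSpace ℝ (Fin n) := fun i => EuclideanSpace.single i 1 with he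
  set D : Fin n → SchwartzMap (EuclideanSpace ℝ (Fin n)) ℝ →L[ℝ]
      SchwartzMap (EuclideanSpace ℝ (Fin n)) ℝ := fun i => LineDeriv.lineDerivOpCLM ℝ (SchwartzMap (EuclideanSpace ℝ (Fin n)) ℝ) (e i) with hDdef
  set L : SchwartzMap (EuclideanSpace ℝ (Fin n)) ℝ := ∑ i : Fin n, D i (D i u) with hL
  set G : SchwartzMap (EuclideanSpace ℝ (Fin n)) ℝ := ∑ i : Fin n, c i • D i u with hG
  have hLap : ∀ x, laplacian u x = L x := by
    intro x
    rw [hL, schwartz_sum_apply, laplacian]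
    rfl
  have hCG : ∀ x, cGrad c u x = G x := by
    intro x
    rw [hG, schwartz_sum_apply, cGrad]
    refine Finset.sum_congr rfl fun i _ => ?_
    rw [SchwartzMap.smul_apply, smul_eq_mul]
    rfl
  have hGS : ∀ x, gradSq u x = ∑ i : Fin n, (D i u x) ^ 2 := fun x => rfl
  -- integrability facts
  have iL2 : Integrable (fun x => (L x) ^ 2) volume := by
    simpa [sq] using schwartz_mul_integrable L L
  have iG2 : Integrable (fun x => (G x) ^ 2) volume := by
    simpa [sq] using schwartz_mul_integrable G G
  have iu2 : Integrable (fun x => (u x) ^ 2) volume := by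
    simpa [sq] using schwartz_mul_integrable u u
  have igs : Integrable (fun x => gradSq u x) volume := by
    have h : Integrable (fun x => ∑ i : Fin n, (D i u x) ^ 2) volume := by
      apply integrable_finset_sum
      intro i _
      simpa [sq] using schwartz_mul_integrable (D i u) (D i u)
    exact h.congr (by filter_upwards with x using (hGS x).symm)
  -- integration by parts: ∫ gradSq = - ∫ u * L
  have hIBP : ∫ x, gradSq u x = - ∫ x, u x * L x := by
    have h1 : ∀ i : Fin n, ∫ x, (D i u x) * (D i u x) = - ∫ x, u x * (D i (D i u)) x := by
      intro i
      have key := integral_mul_fderiv_eq_neg_fderiv_mul_of_integrable (𝕜 := ℝ)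
        (μ := (volume : Measure (EuclideanSpace ℝ (Fin n))))
        (f := fun x => u x) (g := fun x => (D i u) x) (v := e i)
        (schwartz_mul_integrable (D i u) (D i u))
        (schwartz_mul_integrable u (D i (D i u)))
        (schwartz_mul_integrable u (D i u)) (fun x _ => u.differentiable x) (fun x _ => (D i u).differentiable x)
      rw [← neg_eq_iff_eq_neg] at key
      calc ∫ x, (D i u x) * (D i u x)
          = ∫ x, fderiv ℝ (fun x => u x) x (e i) * (D i u) x := rfl
        _ = - ∫ x, u x * fderiv ℝ (fun x => (D i u) x) x (e i) := by rw [key]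
        _ = - ∫ x, u x * (D i (D i u)) x := rfl
    have h2 : ∫ x, gradSq u x = ∑ i : Fin n, ∫ x, (D i u x) * (D i u x) := by
      rw [← integral_finset_sum]
      · apply integral_congr_ae
        filter_upwards with x
        rw [hGS x]
        exact Finset.sum_congr rfl fun i _ => sq (D i u x)
      · intro i _
        exact schwartz_mul_integrable (D i u) (D i u)
    rw [h2]
    calc ∑ i : Fin n, ∫ x, (D i u x) * (D i u x)
        = ∑ i : Fin n, - ∫ x, u x * (D i (D i u)) x := Finset.sum_congr rfl fun i _ => h1 i
      _ = - ∑ i : Fin n, ∫ x, u x * (D i (D i u)) x := by rw [← Finset.sum_neg_distrib]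
      _ = - ∫ x, ∑ i : Fin n, u x * (D i (D i u)) x := by
          rw [integral_finset_sum]
          intro i _
          exact schwartz_mul_integrable u (D i (D i u))
      _ = - ∫ x, u x * L x := by
          congr 1
          apply integral_congr_ae
          filter_upwards with x
          rw [hL, schwartz_sum_apply, Finset.mul_sum]
  -- abbreviations for the four integrals
  set A : ℝ := ∫ x, (L x) ^ 2 with hA
  set B : ℝ := ∫ x, gradSq u x with hB
  set Dd : ℝ := ∫ x, (u x) ^ 2 with hDd
  set Cg : ℝ := ∫ x, (G x) ^ 2 with hCg
  have hA0 : 0 ≤ A := integral_nonneg fun x => sq_nonneg _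
  have hB0 : 0 ≤ B := integral_nonneg fun x => Finset.sum_nonneg fun i _ => sq_nonneg _
  have hD0 : 0 ≤ Dd := integral_nonneg fun x => sq_nonneg _
  have hC0 : 0 ≤ Cg := integral_nonneg fun x => sq_nonneg _
  -- 2B ≤ A + Dd
  have hkey : 2 * B ≤ A + Dd := by
    have h2B : 2 * B = ∫ x, (-2 : ℝ) * (u x * L x) := by
      rw [integral_const_mul, hIBP]; ring
    have hmono : ∫ x, (-2 : ℝ) * (u x * L x) ≤ ∫ x, ((u x) ^ 2 + (L x) ^ 2) := by
      apply integral_mono ((schwartz_mul_integrable u L).const_mul _) (iu2.add iL2)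
      intro x
      simp only [Pi.add_apply]
      nlinarith [sq_nonneg (u x + L x)]
    rw [integral_add iu2 iL2] at hmono
    rw [← h2B] at hmono
    linarith
  -- Cauchy–Schwarz: Cg ≤ s * B
  have hCS : Cg ≤ s * B := by
    have hnorm : s = ∑ i : Fin n, (c i) ^ 2 := by
      rw [hs, EuclideanSpace.norm_eq, Real.sq_sqrt (Finset.sum_nonneg fun i _ => sq_nonneg _)]
      simp [Real.norm_eq_abs, sq_abs]
    have hpt : ∀ x, (G x) ^ 2 ≤ s * gradSq u x := by
      intro x
      have hGx : G x = ∑ i : Fin n, c i * (D i u x) := by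
        rw [hG, schwartz_sum_apply]
        exact Finset.sum_congr rfl fun i _ => by rw [SchwartzMap.smul_apply, smul_eq_mul]
      rw [hGx, hGS x, hnorm]
      exact Finset.sum_mul_sq_le_sq_mul_sq _ _ _
    calc Cg ≤ ∫ x, s * gradSq u x := integral_mono iG2 (igs.const_mul s) hpt
      _ = s * B := by rw [integral_const_mul]
  -- splitting the integrals
  have hsplit1 : ∫ x, ((laplacian u x) ^ 2 + gradSq u x + (u x) ^ 2) = A + B + Dd := by
    have : ∫ x, ((laplacian u x) ^ 2 + gradSq u x + (u x) ^ 2)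
        = ∫ x, ((L x) ^ 2 + gradSq u x + (u x) ^ 2) := by
      apply integral_congr_ae
      filter_upwards with x
      rw [hLap x]
    calc ∫ x, ((laplacian u x) ^ 2 + gradSq u x + (u x) ^ 2)
        = ∫ x, ((L x) ^ 2 + gradSq u x + (u x) ^ 2) := this
      _ = (∫ x, ((L x) ^ 2 + gradSq u x)) + Dd := integral_add (iL2.add igs) iu2
      _ = A + B + Dd := congrArg (· + Dd) (integral_add iL2 igs)
  have hsplit2 : ∫ x, ((laplacian u x) ^ 2 - (cGrad c u x) ^ 2 + (u x) ^ 2)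
      = A - Cg + Dd := by
    have : ∫ x, ((laplacian u x) ^ 2 - (cGrad c u x) ^ 2 + (u x) ^ 2)
        = ∫ x, ((L x) ^ 2 - (G x) ^ 2 + (u x) ^ 2) := by
      apply integral_congr_ae
      filter_upwards with x
      rw [hLap x, hCG x]
    calc ∫ x, ((laplacian u x) ^ 2 - (cGrad c u x) ^ 2 + (u x) ^ 2)
        = ∫ x, ((L x) ^ 2 - (G x) ^ 2 + (u x) ^ 2) := this
      _ = (∫ x, ((L x) ^ 2 - (G x) ^ 2)) + Dd := integral_add (iL2.sub iG2) iu2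
      _ = A - Cg + Dd := congrArg (· + Dd) (integral_sub iL2 iG2)
  rw [hsplit1, hsplit2]
  clear_value s A B Dd Cg
  clear hsplit1 hsplit2 hIBP hLap hCG hGS hs hL hG hA hB hDd hCg iL2 iG2 iu2 igs
  clear L G D e he hDdef u
  constructor
  · nlinarith [mul_nonneg (by linarith : (0:ℝ) ≤ 1 + s)
      (by linarith : (0:ℝ) ≤ A + Dd - 2 * B)]
  · linarith
end

section
/- Let $n \ge 1$, let $c \in \mathbb{R}^n$ satisfy $0 < |c| < \sqrt{2}$, and let $f : \mathbb{R} \to \mathbb{R}$ satisfy $|f(u)| \le C_1 |u|^q$ for all $u \in \mathbb{R}$, for some constants $C_1 > 0$ and $q > 1$ (with $q < \frac{n+4}{n-4}$ if $n > 4$). Then for every Schwartz function $w : \mathbb{R}^n \to \mathbb{R}$ that is not identically zero, there exists $A_0 > 0$ such that $P_c(A w) > 0$ for all $0 < A < A_0$, where $$P_c(u) = \int_{\mathbb{R}^n} (\Delta u)^2 - (c\cdot\nabla u)^2 + u^2 \,dx + \int_{\mathbb{R}^n} u\,f(u) \,dx.$$ -/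
set_option maxHeartbeats 1000000


open MeasureTheory

/-- The Nehari functional `P_c`. -/
noncomputable def Pc {n : ℕ} (c : EuclideanSpace ℝ (Fin n)) (f : ℝ → ℝ)
    (u : EuclideanSpace ℝ (Fin n) → ℝ) : ℝ :=
  (∫ x, ((laplacian u x) ^ 2 - (cGrad c u x) ^ 2 + (u x) ^ 2)) + ∫ x, u x * f (u x)

section aux

variable {n : ℕ}

/-- Partial derivative in direction `eᵢ`, as a Schwartz map. -/
noncomputable def pd (i : Fin n) (g : SchwartzMap (EuclideanSpace ℝ (Fin n)) ℝ) :
    SchwartzMap (EuclideanSpace ℝ (Fin n)) ℝ :=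
  LineDeriv.lineDerivOp (EuclideanSpace.single i (1 : ℝ)) g

lemma pd_apply (i : Fin n) (g : SchwartzMap (EuclideanSpace ℝ (Fin n)) ℝ)
    (x : EuclideanSpace ℝ (Fin n)) :
    pd i g x = fderiv ℝ g x (EuclideanSpace.single i 1) :=
  SchwartzMap.lineDerivOp_apply_eq_fderiv _ g x

lemma pd_coe (i : Fin n) (g : SchwartzMap (EuclideanSpace ℝ (Fin n)) ℝ) :
    (fun y => fderiv ℝ (⇑g) y (EuclideanSpace.single i 1)) = ⇑(pd i g) :=
  funext fun y => (pd_apply i g y).symm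

lemma sch_sum_apply {ι : Type*} (s : Finset ι)
    (F : ι → SchwartzMap (EuclideanSpace ℝ (Fin n)) ℝ) (x : EuclideanSpace ℝ (Fin n)) :
    (∑ i ∈ s, F i) x = ∑ i ∈ s, F i x := by
  exact SchwartzMap.sum_apply ..

lemma sch_mul_integrable (g h : SchwartzMap (EuclideanSpace ℝ (Fin n)) ℝ) :
    Integrable (fun x => g x * h x) := by
  obtain ⟨C, -, hC⟩ := g.decay 0 0
  refine h.integrable.bdd_mul (c := C) g.continuous.aestronglyMeasurable (Filter.Eventually.of_forall fun x => ?_)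
  simpa using hC x

lemma sch_sq_integrable (g : SchwartzMap (EuclideanSpace ℝ (Fin n)) ℝ) :
    Integrable (fun x => g x ^ 2) := by
  simpa [pow_two] using sch_mul_integrable g g

lemma lap_eq (w : SchwartzMap (EuclideanSpace ℝ (Fin n)) ℝ) (x : EuclideanSpace ℝ (Fin n)) :
    laplacian (⇑w) x = ∑ i : Fin n, pd i (pd i w) x := by
  unfold laplacian
  refine Finset.sum_congr rfl fun i _ => ?_
  rw [pd_apply, pd_coe]

lemma cGrad_eq (c : EuclideanSpace ℝ (Fin n)) (w : SchwartzMap (EuclideanSpace ℝ (Fin n)) ℝ)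
    (x : EuclideanSpace ℝ (Fin n)) :
    cGrad c (⇑w) x = ∑ i : Fin n, c i * pd i w x := by
  unfold cGrad
  refine Finset.sum_congr rfl fun i _ => ?_
  rw [pd_apply]

lemma lap_smul (A : ℝ) (w : SchwartzMap (EuclideanSpace ℝ (Fin n)) ℝ)
    (x : EuclideanSpace ℝ (Fin n)) :
    laplacian (fun y => A * w y) x = A * laplacian (⇑w) x := by
  unfold laplacian
  rw [Finset.mul_sum]
  refine Finset.sum_congr rfl fun i _ => ?_
  have h1 : (fun y => fderiv ℝ (fun z => A * w z) y (EuclideanSpace.single i 1)) =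
      fun y => A * pd i w y := by
    funext y
    rw [fderiv_const_mul w.differentiableAt A, pd_apply]
    rfl
  rw [h1, fderiv_const_mul (pd i w).differentiableAt A, pd_coe]
  rfl

lemma cGrad_smul (c : EuclideanSpace ℝ (Fin n)) (A : ℝ)
    (w : SchwartzMap (EuclideanSpace ℝ (Fin n)) ℝ) (x : EuclideanSpace ℝ (Fin n)) :
    cGrad c (fun y => A * w y) x = A * cGrad c (⇑w) x := by
  unfold cGrad
  rw [Finset.mul_sum]
  refine Finset.sum_congr rfl fun i _ => ?_
  rw [fderiv_const_mul w.differentiableAt A]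
  simp only [ContinuousLinearMap.coe_smul', Pi.smul_apply, smul_eq_mul]
  ring

/-- Integration by parts: `∫ (∂ᵢ g)² = - ∫ g * ∂ᵢ∂ᵢ g`. -/
lemma ibp (i : Fin n) (g : SchwartzMap (EuclideanSpace ℝ (Fin n)) ℝ) :
    ∫ x, (pd i g x) ^ 2 = - ∫ x, g x * pd i (pd i g) x := by
  have key : ∫ x, g x * fderiv ℝ (⇑(pd i g)) x (EuclideanSpace.single i 1) =
      - ∫ x, fderiv ℝ (⇑g) x (EuclideanSpace.single i 1) * pd i g x := by
    refine integral_mul_fderiv_eq_neg_fderiv_mul_of_integrable ?_ ?_ ?_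
      (fun x _ => g.differentiableAt) (fun x _ => (pd i g).differentiableAt)
    · have := sch_mul_integrable (pd i g) (pd i g)
      refine this.congr ?_
      filter_upwards with x
      rw [← pd_apply]
    · have := sch_mul_integrable g (pd i (pd i g))
      refine this.congr ?_
      filter_upwards with x
      rw [← pd_apply (i := i) (g := pd i g)]
    · exact sch_mul_integrable g (pd i g)
  simp only [← pd_apply] at key
  simp only [pow_two]
  rw [key, neg_neg]

end aux

theorem stmt_7 (n : ℕ) (hn : 1 ≤ n) (c : EuclideanSpace ℝ (Fin n))
    (hc0 : 0 < ‖c‖) (hc2 : ‖c‖ < Real.sqrt 2) (f : ℝ → ℝ)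
    (C₁ q : ℝ) (hC₁ : 0 < C₁) (hq : 1 < q) (hqn : n > 4 → q < ((n : ℝ) + 4) / ((n : ℝ) - 4))
    (hf : ∀ u : ℝ, |f u| ≤ C₁ * |u| ^ q)
    (w : SchwartzMap (EuclideanSpace ℝ (Fin n)) ℝ) (hw : w ≠ 0) :
    ∃ A₀ : ℝ, 0 < A₀ ∧ ∀ A : ℝ, 0 < A → A < A₀ →
      0 < Pc c f (fun x => A * w x) := by
  have hcsq : ‖c‖ ^ 2 < 2 := by
    have := (Real.lt_sqrt (le_of_lt hc0)).mp hc2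
    linarith
  -- the Laplacian and gradient-term of w as Schwartz maps
  set W2 : SchwartzMap (EuclideanSpace ℝ (Fin n)) ℝ := ∑ i : Fin n, pd i (pd i w) with hW2
  have hW2x : ∀ x, laplacian (⇑w) x = W2 x := by
    intro x
    rw [lap_eq, hW2, sch_sum_apply]
  set CG : SchwartzMap (EuclideanSpace ℝ (Fin n)) ℝ := ∑ i : Fin n, c i • pd i w with hCG
  have hCGx : ∀ x, cGrad c (⇑w) x = CG x := by
    intro x
    rw [cGrad_eq, hCG, sch_sum_apply]
    exact Finset.sum_congr rfl fun i _ => by simp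
  set I₀ : ℝ := ∫ x, (w x) ^ 2 with hI₀
  set I₂ : ℝ := ∫ x, (W2 x) ^ 2 with hI₂
  set ICG : ℝ := ∫ x, (CG x) ^ 2 with hICG
  -- positivity of I₀
  have hI₀pos : 0 < I₀ := by
    rw [hI₀]
    have hnn : (0 : EuclideanSpace ℝ (Fin n) → ℝ) ≤ fun x => (w x) ^ 2 := fun x => sq_nonneg _
    rw [integral_pos_iff_support_of_nonneg hnn (sch_sq_integrable w)]
    have hsup : Function.support (fun x => (w x) ^ 2) = Function.support (⇑w) := by
      ext x; simp [Function.mem_support]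
    rw [hsup]
    refine (w.continuous.isOpen_support).measure_pos volume ?_
    rw [Function.support_nonempty_iff]
    intro h
    apply hw
    ext x
    simp [show ⇑w = 0 from h]
  have hI₂nn : 0 ≤ I₂ := integral_nonneg fun x => sq_nonneg _
  -- sum of squared gradients via integration by parts
  have hsum2 : ∑ i : Fin n, (∫ x, (pd i w x) ^ 2) = - ∫ x, w x * W2 x := by
    rw [Finset.sum_congr rfl fun i _ => ibp i w, Finset.sum_neg_distrib]
    congr 1
    rw [← integral_finset_sum Finset.univ (fun i _ => sch_mul_integrable w (pd i (pd i w)))]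
    refine integral_congr_ae (Filter.Eventually.of_forall fun x => ?_)
    dsimp only
    rw [← Finset.mul_sum]
    congr 1
    rw [hW2, sch_sum_apply]
  -- bound the gradient sum by (I₀ + I₂)/2
  have hD : - ∫ x, w x * W2 x ≤ (I₀ + I₂) / 2 := by
    have hpt : ∀ x, -(w x * W2 x) ≤ ((w x) ^ 2 + (W2 x) ^ 2) / 2 := by
      intro x; nlinarith [sq_nonneg (w x + W2 x)]
    calc - ∫ x, w x * W2 x = ∫ x, -(w x * W2 x) := by rw [integral_neg]
      _ ≤ ∫ x, ((w x) ^ 2 + (W2 x) ^ 2) / 2 := by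
          refine integral_mono ((sch_mul_integrable w W2).neg) ?_ hpt
          exact ((sch_sq_integrable w).add (sch_sq_integrable W2)).div_const 2
      _ = (I₀ + I₂) / 2 := by
          rw [integral_div, integral_add (sch_sq_integrable w) (sch_sq_integrable W2)]
  -- Cauchy–Schwarz bound for ICG
  have hnormc : ‖c‖ ^ 2 = ∑ i : Fin n, (c i) ^ 2 := by
    rw [EuclideanSpace.norm_eq, Real.sq_sqrt (by positivity)]
    exact Finset.sum_congr rfl fun i _ => by rw [Real.norm_eq_abs, sq_abs]
  have hCS : ICG ≤ ‖c‖ ^ 2 * ∑ i : Fin n, (∫ x, (pd i w x) ^ 2) := by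
    have hint : Integrable (fun x => ‖c‖ ^ 2 * ∑ i : Fin n, (pd i w x) ^ 2) := by
      exact (integrable_finset_sum Finset.univ fun i _ => sch_sq_integrable (pd i w)).const_mul _
    calc ICG ≤ ∫ x, ‖c‖ ^ 2 * ∑ i : Fin n, (pd i w x) ^ 2 := by
          refine integral_mono_of_nonneg (Filter.Eventually.of_forall fun x => sq_nonneg _)
            hint (Filter.Eventually.of_forall fun x => ?_)
          have h1 : CG x = ∑ i : Fin n, c i * pd i w x := by
            rw [← hCGx, cGrad_eq]
          dsimp only
          rw [h1, hnormc]
          exact Finset.sum_mul_sq_le_sq_mul_sq Finset.univ _ _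
      _ = ‖c‖ ^ 2 * ∑ i : Fin n, (∫ x, (pd i w x) ^ 2) := by
          rw [integral_const_mul]
          congr 1
          exact integral_finset_sum Finset.univ fun i _ => sch_sq_integrable (pd i w)
  have hICGle : ICG ≤ ‖c‖ ^ 2 * ((I₀ + I₂) / 2) := by
    refine hCS.trans ?_
    have := hsum2 ▸ hD
    nlinarith [sq_nonneg ‖c‖]
  -- the quadratic form
  set QQ : ℝ := ∫ x, ((W2 x) ^ 2 - (CG x) ^ 2 + (w x) ^ 2) with hQQ
  have hQQsplit : QQ = I₂ - ICG + I₀ := by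
    have h1 : QQ = (∫ x, ((W2 x) ^ 2 - (CG x) ^ 2)) + ∫ x, (w x) ^ 2 :=
      integral_add ((sch_sq_integrable W2).sub (sch_sq_integrable CG)) (sch_sq_integrable w)
    have h2 : (∫ x, ((W2 x) ^ 2 - (CG x) ^ 2)) = I₂ - ICG :=
      integral_sub (sch_sq_integrable W2) (sch_sq_integrable CG)
    rw [h1, h2]
  have hQQpos : 0 < QQ := by
    rw [hQQsplit]
    nlinarith [hI₀pos, hI₂nn, hICGle, hcsq]
  -- the nonlinear term bound
  obtain ⟨Cb, hCbpos, hCb⟩ := w.decay 0 0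
  have hwbd : ∀ x, |w x| ≤ Cb := fun x => by simpa using hCb x
  have habs_cont : Continuous (fun x : EuclideanSpace ℝ (Fin n) => |w x| ^ (q + 1)) := by
    exact Continuous.rpow_const (w.continuous.abs) fun x => Or.inr (by linarith)
  have hM₁int : Integrable (fun x : EuclideanSpace ℝ (Fin n) => |w x| ^ (q + 1)) := by
    refine Integrable.mono' ((w.integrable.abs).const_mul (Cb ^ q)) habs_cont.aestronglyMeasurable
      (Filter.Eventually.of_forall fun x => ?_)
    rw [Real.norm_eq_abs, abs_of_nonneg (Real.rpow_nonneg (abs_nonneg _) _)]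
    calc |w x| ^ (q + 1) = |w x| ^ q * |w x| ^ (1:ℝ) := by
          rw [← Real.rpow_add' (abs_nonneg _) (by linarith)]
      _ ≤ Cb ^ q * |w x| := by
          rw [Real.rpow_one]
          have h1 : |w x| ^ q ≤ Cb ^ q :=
            Real.rpow_le_rpow (abs_nonneg _) (hwbd x) (by linarith)
          exact mul_le_mul_of_nonneg_right h1 (abs_nonneg _)
  set M₁ : ℝ := ∫ x, |w x| ^ (q + 1) with hM₁
  have hM₁nn : 0 ≤ M₁ := integral_nonneg fun x => Real.rpow_nonneg (abs_nonneg _) _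
  set K : ℝ := C₁ * (M₁ + 1) with hK
  have hKpos : 0 < K := by positivity
  refine ⟨min 1 ((QQ / K) ^ (1 / (q - 1))), lt_min one_pos
    (Real.rpow_pos_of_pos (div_pos hQQpos hKpos) _), fun A hA hAlt => ?_⟩
  -- key power estimate
  have hApow : A ^ (q - 1) < QQ / K := by
    have h1 : A < (QQ / K) ^ (1 / (q - 1)) := lt_of_lt_of_le hAlt (min_le_right _ _)
    have h2 : A ^ (q - 1) < ((QQ / K) ^ (1 / (q - 1))) ^ (q - 1) :=
      Real.rpow_lt_rpow hA.le h1 (by linarith)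
    calc A ^ (q - 1) < ((QQ / K) ^ (1 / (q - 1))) ^ (q - 1) := h2
      _ = QQ / K := by
          rw [← Real.rpow_mul (le_of_lt (div_pos hQQpos hKpos)),
            one_div_mul_cancel (by linarith : q - 1 ≠ 0), Real.rpow_one]
  -- the nonlinear term
  set R : ℝ := ∫ x, (A * w x) * f (A * w x) with hR
  have hRbound : |R| ≤ C₁ * A ^ (q + 1) * M₁ := by
    have h1 : |R| ≤ ∫ x, |(A * w x) * f (A * w x)| := by
      rw [hR]
      simpa only [Real.norm_eq_abs] using
        norm_integral_le_integral_norm (μ := volume) (fun x => (A * w x) * f (A * w x))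
    refine h1.trans ?_
    have h2 : (∫ x, |(A * w x) * f (A * w x)|)
        ≤ ∫ x, C₁ * (A ^ (q + 1) * |w x| ^ (q + 1)) := by
      refine integral_mono_of_nonneg (Filter.Eventually.of_forall fun x => abs_nonneg _)
        ((hM₁int.const_mul _).const_mul _) (Filter.Eventually.of_forall fun x => ?_)
      dsimp only
      calc |(A * w x) * f (A * w x)| = |A * w x| * |f (A * w x)| := abs_mul _ _
        _ ≤ |A * w x| * (C₁ * |A * w x| ^ q) :=
            mul_le_mul_of_nonneg_left (hf _) (abs_nonneg _)
        _ = C₁ * |A * w x| ^ (q + 1) := by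
            rw [Real.rpow_add' (abs_nonneg _) (by linarith : q + 1 ≠ 0), Real.rpow_one]
            ring
        _ = C₁ * (A ^ (q + 1) * |w x| ^ (q + 1)) := by
            rw [abs_mul, abs_of_pos hA, Real.mul_rpow hA.le (abs_nonneg _)]
    refine h2.trans_eq ?_
    rw [integral_const_mul, integral_const_mul, ← hM₁]
    ring
  -- identify Pc with the two pieces
  have hPc : Pc c f (fun x => A * w x) = A ^ 2 * QQ + R := by
    rw [hR]
    unfold Pc
    congr 1
    calc (∫ x, ((laplacian (fun y => A * w y) x) ^ 2 - (cGrad c (fun y => A * w y) x) ^ 2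
            + (A * w x) ^ 2))
        = ∫ x, A ^ 2 * ((W2 x) ^ 2 - (CG x) ^ 2 + (w x) ^ 2) := by
          refine integral_congr_ae (Filter.Eventually.of_forall fun x => ?_)
          dsimp only
          rw [lap_smul, cGrad_smul, hW2x, hCGx]
          ring
      _ = A ^ 2 * QQ := by rw [integral_const_mul, ← hQQ]
  -- final estimate
  have hA2pos : 0 < A ^ 2 := by positivity
  have hpow : A ^ (q + 1) = A ^ (2:ℕ) * A ^ (q - 1) := by
    rw [show q + 1 = ((2:ℕ):ℝ) + (q - 1) by push_cast; ring, Real.rpow_add hA,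
      Real.rpow_natCast]
  have hAq1 : 0 < A ^ (q - 1) := Real.rpow_pos_of_pos hA _
  have hfin : C₁ * A ^ (q + 1) * M₁ < A ^ 2 * QQ := by
    rw [hpow]
    have h3 : C₁ * M₁ * A ^ (q - 1) ≤ K * A ^ (q - 1) := by
      refine mul_le_mul_of_nonneg_right ?_ hAq1.le
      rw [hK]
      nlinarith
    have h4 : K * A ^ (q - 1) < QQ := by
      have h5 : A ^ (q - 1) * K < QQ := (lt_div_iff₀ hKpos).mp hApow
      nlinarith
    nlinarith [hA2pos]
  have habs : |R| < A ^ 2 * QQ := lt_of_le_of_lt hRbound hfin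
  have habs2 := abs_lt.mp habs
  rw [hPc]
  linarith [habs2.1]
end

section
/- Let $n \ge 1$, let $1 < \alpha < \beta < \gamma < \infty$, and let $C_\alpha, C_\beta, C_\gamma > 0$. Then there exist constants $\epsilon > 0$ and $C_0 > 0$ (depending only on $n$, $\alpha$, $\beta$, $\gamma$, $C_\alpha$, $C_\beta$, $C_\gamma$) such that every measurable function $f : \mathbb{R}^n \to \mathbb{R}$ satisfying $\|f\|_{L^\alpha(\mathbb{R}^n)} \le C_\alpha$, $\|f\|_{L^\beta(\mathbb{R}^n)} \ge C_\beta$, and $\|f\|_{L^\gamma(\mathbb{R}^n)} \le C_\gamma$ also satisfies $$\mu\bigl(\{x \in \mathbb{R}^n : |f(x)| \ge \epsilon\}\bigr) \ge C_0,$$ where $\mu$ denotes Lebesgue measure on $\mathbb{R}^n$. -/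
open MeasureTheory
open scoped ENNReal NNReal

theorem stmt_8 (n : ℕ) (hn : 1 ≤ n) (α β γ : ℝ) (hα : 1 < α) (hαβ : α < β) (hβγ : β < γ)
    (Cα Cβ Cγ : ℝ) (hCα : 0 < Cα) (hCβ : 0 < Cβ) (hCγ : 0 < Cγ) :
    ∃ ε C₀ : ℝ, 0 < ε ∧ 0 < C₀ ∧
      ∀ f : EuclideanSpace ℝ (Fin n) → ℝ, Measurable f →
        eLpNorm f (ENNReal.ofReal α) volume ≤ ENNReal.ofReal Cα →
        ENNReal.ofReal Cβ ≤ eLpNorm f (ENNReal.ofReal β) volume →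
        eLpNorm f (ENNReal.ofReal γ) volume ≤ ENNReal.ofReal Cγ →
        ENNReal.ofReal C₀ ≤ volume {x : EuclideanSpace ℝ (Fin n) | ε ≤ |f x|} := by
  have hβ1 : (1:ℝ) < β := hα.trans hαβ
  have hγ1 : (1:ℝ) < γ := hβ1.trans hβγ
  have hα0 : (0:ℝ) < α := by linarith
  have hβ0 : (0:ℝ) < β := by linarith
  have hγ0 : (0:ℝ) < γ := by linarith
  have hCαα : (0:ℝ) < Cα ^ α := Real.rpow_pos_of_pos hCα α
  have hCββ : (0:ℝ) < Cβ ^ β := Real.rpow_pos_of_pos hCβ β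
  have hCγγ : (0:ℝ) < Cγ ^ γ := Real.rpow_pos_of_pos hCγ γ
  set ε : ℝ := min 1 ((Cβ ^ β / (3 * Cα ^ α)) ^ (1 / (β - α))) with hεdef
  set M : ℝ := max 1 ((3 * Cγ ^ γ / Cβ ^ β) ^ (1 / (γ - β))) with hMdef
  have hεpos : 0 < ε := lt_min one_pos (Real.rpow_pos_of_pos (by positivity) _)
  have hM1 : (1:ℝ) ≤ M := le_max_left _ _
  have hMpos : (0:ℝ) < M := lt_of_lt_of_le one_pos hM1
  have hMβ : (0:ℝ) < M ^ β := Real.rpow_pos_of_pos hMpos β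
  have hest1 : ε ^ (β - α) * Cα ^ α ≤ Cβ ^ β / 3 := by
    have h1 : ε ^ (β - α) ≤ Cβ ^ β / (3 * Cα ^ α) := by
      have := Real.rpow_le_rpow hεpos.le (min_le_right 1 _)
        (by linarith : (0:ℝ) ≤ β - α)
      rwa [← Real.rpow_mul (by positivity),
        one_div_mul_cancel (by intro h; linarith [sub_eq_zero.mp h] : β - α ≠ 0),
        Real.rpow_one] at this
    calc ε ^ (β - α) * Cα ^ α ≤ Cβ ^ β / (3 * Cα ^ α) * Cα ^ α :=
          mul_le_mul_of_nonneg_right h1 hCαα.le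
      _ = Cβ ^ β / 3 := by field_simp
  have hest2 : M ^ (β - γ) * Cγ ^ γ ≤ Cβ ^ β / 3 := by
    have h1 : 3 * Cγ ^ γ / Cβ ^ β ≤ M ^ (γ - β) := by
      have := Real.rpow_le_rpow (by positivity) (le_max_right (1:ℝ)
        ((3 * Cγ ^ γ / Cβ ^ β) ^ (1 / (γ - β)))) (by linarith : (0:ℝ) ≤ γ - β)
      rwa [← Real.rpow_mul (by positivity),
        one_div_mul_cancel (by intro h; linarith [sub_eq_zero.mp h] : γ - β ≠ 0),
        Real.rpow_one] at this
    have h2 : M ^ (β - γ) ≤ Cβ ^ β / (3 * Cγ ^ γ) := by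
      have hβγ' : β - γ = -(γ - β) := by ring
      rw [hβγ', Real.rpow_neg hMpos.le]
      have := inv_anti₀ (by positivity : (0:ℝ) < 3 * Cγ ^ γ / Cβ ^ β) h1
      rwa [inv_div] at this
    calc M ^ (β - γ) * Cγ ^ γ ≤ Cβ ^ β / (3 * Cγ ^ γ) * Cγ ^ γ :=
          mul_le_mul_of_nonneg_right h2 hCγγ.le
      _ = Cβ ^ β / 3 := by field_simp
  refine ⟨ε, Cβ ^ β / (3 * M ^ β), hεpos, by positivity, ?_⟩
  intro f hf hfα hfβ hfγ
  set A : Set (EuclideanSpace ℝ (Fin n)) := {x | ε ≤ |f x|} with hAdef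
  have hA : MeasurableSet A := measurableSet_le measurable_const hf.abs
  -- translate eLpNorm bounds into lintegral bounds
  have htoα : (ENNReal.ofReal α).toReal = α := ENNReal.toReal_ofReal hα0.le
  have htoβ : (ENNReal.ofReal β).toReal = β := ENNReal.toReal_ofReal hβ0.le
  have htoγ : (ENNReal.ofReal γ).toReal = γ := ENNReal.toReal_ofReal hγ0.le
  have hIα : ∫⁻ x, (‖f x‖₊ : ℝ≥0∞) ^ α ∂volume ≤ ENNReal.ofReal (Cα ^ α) := by
    rw [eLpNorm_eq_lintegral_rpow_enorm_toReal (by simpa using hα0)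
      ENNReal.ofReal_ne_top, htoα] at hfα
    have := ENNReal.rpow_le_rpow hfα hα0.le
    rwa [← ENNReal.rpow_mul, one_div, inv_mul_cancel₀ hα0.ne', ENNReal.rpow_one,
      ENNReal.ofReal_rpow_of_pos hCα] at this
  have hIγ : ∫⁻ x, (‖f x‖₊ : ℝ≥0∞) ^ γ ∂volume ≤ ENNReal.ofReal (Cγ ^ γ) := by
    rw [eLpNorm_eq_lintegral_rpow_enorm_toReal (by simpa using hγ0)
      ENNReal.ofReal_ne_top, htoγ] at hfγ
    have := ENNReal.rpow_le_rpow hfγ hγ0.le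
    rwa [← ENNReal.rpow_mul, one_div, inv_mul_cancel₀ hγ0.ne', ENNReal.rpow_one,
      ENNReal.ofReal_rpow_of_pos hCγ] at this
  have hIβ : ENNReal.ofReal (Cβ ^ β) ≤ ∫⁻ x, (‖f x‖₊ : ℝ≥0∞) ^ β ∂volume := by
    rw [eLpNorm_eq_lintegral_rpow_enorm_toReal (by simpa using hβ0)
      ENNReal.ofReal_ne_top, htoβ] at hfβ
    have := ENNReal.rpow_le_rpow hfβ hβ0.le
    rwa [← ENNReal.rpow_mul, one_div, inv_mul_cancel₀ hβ0.ne', ENNReal.rpow_one,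
      ENNReal.ofReal_rpow_of_pos hCβ] at this
  -- pointwise bound
  have hpt : ∀ x, (‖f x‖₊ : ℝ≥0∞) ^ β ≤
      ENNReal.ofReal (ε ^ (β - α)) * (‖f x‖₊ : ℝ≥0∞) ^ α
      + A.indicator (fun _ => ENNReal.ofReal (M ^ β)) x
      + ENNReal.ofReal (M ^ (β - γ)) * (‖f x‖₊ : ℝ≥0∞) ^ γ := by
    intro x
    set t : ℝ := |f x| with htdef
    have ht : 0 ≤ t := abs_nonneg _
    have hcoe : (‖f x‖₊ : ℝ≥0∞) = ENNReal.ofReal t := Real.enorm_eq_ofReal_abs (f x)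
    rw [hcoe, ENNReal.ofReal_rpow_of_nonneg ht hβ0.le,
      ENNReal.ofReal_rpow_of_nonneg ht hα0.le,
      ENNReal.ofReal_rpow_of_nonneg ht hγ0.le]
    rcases lt_or_ge t ε with h1 | h1
    · have hb : t ^ β ≤ ε ^ (β - α) * t ^ α := by
        have : t ^ β = t ^ (β - α) * t ^ α := by
          rw [← Real.rpow_add_of_nonneg ht (by linarith) hα0.le]; ring_nf
        rw [this]
        exact mul_le_mul_of_nonneg_right
          (Real.rpow_le_rpow ht h1.le (by linarith)) (Real.rpow_nonneg ht α)
      have : ENNReal.ofReal (t ^ β) ≤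
          ENNReal.ofReal (ε ^ (β - α)) * ENNReal.ofReal (t ^ α) := by
        rw [← ENNReal.ofReal_mul (by positivity)]
        exact ENNReal.ofReal_le_ofReal hb
      exact le_add_right (le_add_right this)
    · rcases le_or_gt t M with h2 | h2
      · have hmem : x ∈ A := h1
        have : ENNReal.ofReal (t ^ β) ≤
            A.indicator (fun _ => ENNReal.ofReal (M ^ β)) x := by
          rw [Set.indicator_of_mem hmem]
          exact ENNReal.ofReal_le_ofReal (Real.rpow_le_rpow ht h2 hβ0.le)
        exact le_add_right (this.trans (self_le_add_left _ _))
      · have hb : t ^ β ≤ M ^ (β - γ) * t ^ γ := by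
          have htpos : 0 < t := lt_trans hMpos h2
          have : t ^ β = t ^ (β - γ) * t ^ γ := by
            rw [← Real.rpow_add htpos]; ring_nf
          rw [this]
          exact mul_le_mul_of_nonneg_right
            (Real.rpow_le_rpow_of_nonpos hMpos h2.le (by linarith))
            (Real.rpow_nonneg ht γ)
        have : ENNReal.ofReal (t ^ β) ≤
            ENNReal.ofReal (M ^ (β - γ)) * ENNReal.ofReal (t ^ γ) := by
          rw [← ENNReal.ofReal_mul (by positivity)]
          exact ENNReal.ofReal_le_ofReal hb
        exact this.trans (self_le_add_left _ _)
  -- integrate the pointwise bound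
  have hmeas1 : Measurable fun x =>
      ENNReal.ofReal (ε ^ (β - α)) * (‖f x‖₊ : ℝ≥0∞) ^ α :=
    (hf.nnnorm.coe_nnreal_ennreal.pow_const α).const_mul _
  have hmeas2 : Measurable (A.indicator
      (fun _ : EuclideanSpace ℝ (Fin n) => ENNReal.ofReal (M ^ β))) :=
    measurable_const.indicator hA
  have hmeas3 : Measurable fun x =>
      ENNReal.ofReal (M ^ (β - γ)) * (‖f x‖₊ : ℝ≥0∞) ^ γ :=
    (hf.nnnorm.coe_nnreal_ennreal.pow_const γ).const_mul _
  have hint : ∫⁻ x, (‖f x‖₊ : ℝ≥0∞) ^ β ∂volume ≤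
      ENNReal.ofReal (ε ^ (β - α)) * ∫⁻ x, (‖f x‖₊ : ℝ≥0∞) ^ α ∂volume
      + ENNReal.ofReal (M ^ β) * volume A
      + ENNReal.ofReal (M ^ (β - γ)) * ∫⁻ x, (‖f x‖₊ : ℝ≥0∞) ^ γ ∂volume := by
    calc ∫⁻ x, (‖f x‖₊ : ℝ≥0∞) ^ β ∂volume
        ≤ ∫⁻ x, (ENNReal.ofReal (ε ^ (β - α)) * (‖f x‖₊ : ℝ≥0∞) ^ α
            + A.indicator (fun _ => ENNReal.ofReal (M ^ β)) x
            + ENNReal.ofReal (M ^ (β - γ)) * (‖f x‖₊ : ℝ≥0∞) ^ γ) ∂volume :=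
          lintegral_mono hpt
      _ = _ := by
          rw [lintegral_add_right _ hmeas3, lintegral_add_right _ hmeas2,
            lintegral_const_mul _ (hf.nnnorm.coe_nnreal_ennreal.pow_const α),
            lintegral_const_mul _ (hf.nnnorm.coe_nnreal_ennreal.pow_const γ),
            lintegral_indicator hA, setLIntegral_const]
  have hT1 : ENNReal.ofReal (ε ^ (β - α)) * ∫⁻ x, (‖f x‖₊ : ℝ≥0∞) ^ α ∂volume
      ≤ ENNReal.ofReal (Cβ ^ β / 3) := by
    calc ENNReal.ofReal (ε ^ (β - α)) * ∫⁻ x, (‖f x‖₊ : ℝ≥0∞) ^ α ∂volume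
        ≤ ENNReal.ofReal (ε ^ (β - α)) * ENNReal.ofReal (Cα ^ α) :=
          mul_le_mul_right hIα _
      _ = ENNReal.ofReal (ε ^ (β - α) * Cα ^ α) :=
          (ENNReal.ofReal_mul (by positivity)).symm
      _ ≤ ENNReal.ofReal (Cβ ^ β / 3) := ENNReal.ofReal_le_ofReal hest1
  have hT3 : ENNReal.ofReal (M ^ (β - γ)) * ∫⁻ x, (‖f x‖₊ : ℝ≥0∞) ^ γ ∂volume
      ≤ ENNReal.ofReal (Cβ ^ β / 3) := by
    calc ENNReal.ofReal (M ^ (β - γ)) * ∫⁻ x, (‖f x‖₊ : ℝ≥0∞) ^ γ ∂volume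
        ≤ ENNReal.ofReal (M ^ (β - γ)) * ENNReal.ofReal (Cγ ^ γ) :=
          mul_le_mul_right hIγ _
      _ = ENNReal.ofReal (M ^ (β - γ) * Cγ ^ γ) :=
          (ENNReal.ofReal_mul (by positivity)).symm
      _ ≤ ENNReal.ofReal (Cβ ^ β / 3) := ENNReal.ofReal_le_ofReal hest2
  have hkey : ENNReal.ofReal (Cβ ^ β) ≤
      ENNReal.ofReal (2 * (Cβ ^ β / 3)) + ENNReal.ofReal (M ^ β) * volume A := by
    calc ENNReal.ofReal (Cβ ^ β) ≤ _ := hIβ.trans hint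
      _ ≤ ENNReal.ofReal (Cβ ^ β / 3) + ENNReal.ofReal (M ^ β) * volume A
          + ENNReal.ofReal (Cβ ^ β / 3) := by
          exact add_le_add (add_le_add hT1 le_rfl) hT3
      _ = ENNReal.ofReal (2 * (Cβ ^ β / 3)) + ENNReal.ofReal (M ^ β) * volume A := by
          rw [ENNReal.ofReal_mul (by norm_num : (0:ℝ) ≤ 2),
            show ENNReal.ofReal 2 = 2 by norm_num, two_mul]
          ring
  have hsub : ENNReal.ofReal (Cβ ^ β / 3) ≤ ENNReal.ofReal (M ^ β) * volume A := by
    have h := tsub_le_iff_left.mpr hkey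
    rwa [← ENNReal.ofReal_sub (Cβ ^ β) (by positivity : (0:ℝ) ≤ 2 * (Cβ ^ β / 3)),
      show Cβ ^ β - 2 * (Cβ ^ β / 3) = Cβ ^ β / 3 by ring] at h
  rw [show Cβ ^ β / (3 * M ^ β) = (Cβ ^ β / 3) / M ^ β by ring,
    ENNReal.ofReal_div_of_pos hMβ]
  rw [ENNReal.div_le_iff_le_mul (Or.inl (ENNReal.ofReal_pos.mpr hMβ).ne')
    (Or.inl ENNReal.ofReal_ne_top)]
  rwa [mul_comm]
end

section
/- Let $n \ge 1$, $p \ge 1$, $C > 0$, and let $H : \mathbb{R} \to \mathbb{R}$ satisfy $H(0) = 0$ and $|H(u) - H(v)| \le C(|u|^p + |v|^p)|u - v|$ for all $u, v \in \mathbb{R}$. Let $z \in L^{p+1}(\mathbb{R}^n)$ and let $(z_k)_{k \ge 1}$ be a sequence in $L^{p+1}(\mathbb{R}^n)$ with $\sup_k \|z_k\|_{L^{p+1}(\mathbb{R}^n)} < \infty$ such that $z_k \to z$ strongly in $L^{p+1}(K)$ for every compact set $K \subset \mathbb{R}^n$. Then $$\lim_{k \to \infty} \int_{\mathbb{R}^n}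 \bigl(H(z_k(x)) - H(z_k(x) - z(x)) - H(z(x))\bigr) \,dx = 0.$$ -/
open MeasureTheory Filter ENNReal

lemma bl_rpow_add {a b r : ℝ} (ha : 0 ≤ a) (hb : 0 ≤ b) (hr : 0 ≤ r) :
    (a + b) ^ r ≤ 2 ^ r * (a ^ r + b ^ r) := by
  have h2 : (0:ℝ) ≤ (2:ℝ) ^ r := Real.rpow_nonneg (by norm_num) r
  rcases le_total a b with h | h
  · calc (a + b) ^ r ≤ (2 * b) ^ r := Real.rpow_le_rpow (by linarith) (by linarith) hr
      _ = 2 ^ r * b ^ r := Real.mul_rpow (by norm_num) hb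
      _ ≤ 2 ^ r * (a ^ r + b ^ r) := by nlinarith [Real.rpow_nonneg ha r]
  · calc (a + b) ^ r ≤ (2 * a) ^ r := Real.rpow_le_rpow (by linarith) (by linarith) hr
      _ = 2 ^ r * a ^ r := Real.mul_rpow (by norm_num) ha
      _ ≤ 2 ^ r * (a ^ r + b ^ r) := by nlinarith [Real.rpow_nonneg hb r]

lemma bl_contH {p C : ℝ} (hp : 0 < p) {H : ℝ → ℝ}
    (hH : ∀ u v : ℝ, |H u - H v| ≤ C * (|u| ^ p + |v| ^ p) * |u - v|) :
    Continuous H := by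
  rw [continuous_iff_continuousAt]
  intro u
  have hb : Continuous (fun v : ℝ => C * (|v| ^ p + |u| ^ p) * |v - u|) := by
    refine (continuous_const.mul (((continuous_abs.rpow_const
      (fun x => Or.inr hp.le)).add continuous_const))).mul ?_
    exact (continuous_id.sub continuous_const).abs
  have h0 : Tendsto (fun v => H v - H u) (nhds u) (nhds 0) := by
    refine squeeze_zero_norm (fun v => (hH v u).trans_eq' (by rw [Real.norm_eq_abs])) ?_
    have := hb.tendsto u
    simpa using this
  have := h0.add (tendsto_const_nhds (x := H u))
  simp at this; exact this

lemma bl_frac {a e : ℝ} (ha : 0 ≤ a) (he : 0 < e) : a * (e / (4 * (a + 1))) ≤ e / 4 := by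
  rw [mul_div_assoc']
  rw [div_le_div_iff₀ (by linarith) (by norm_num)]
  nlinarith

set_option maxHeartbeats 2000000 in
theorem stmt_10 (n : ℕ) (hn : 1 ≤ n) (p C : ℝ) (hp : 1 ≤ p) (hC : 0 < C)
    (H : ℝ → ℝ) (hH0 : H 0 = 0)
    (hH : ∀ u v : ℝ, |H u - H v| ≤ C * (|u| ^ p + |v| ^ p) * |u - v|)
    (z : EuclideanSpace ℝ (Fin n) → ℝ)
    (hz : MemLp z (ENNReal.ofReal (p + 1)) volume)
    (zk : ℕ → EuclideanSpace ℝ (Fin n) → ℝ)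
    (hzk : ∀ k, MemLp (zk k) (ENNReal.ofReal (p + 1)) volume)
    (hbdd : ∃ M : ℝ, ∀ k, (∫ x, |zk k x| ^ (p + 1)) ^ (1 / (p + 1)) ≤ M)
    (hloc : ∀ K : Set (EuclideanSpace ℝ (Fin n)), IsCompact K →
      Filter.Tendsto (fun k => ∫ x in K, |zk k x - z x| ^ (p + 1))
        Filter.atTop (nhds 0)) :
    Filter.Tendsto
      (fun k => ∫ x, (H (zk k x) - H (zk k x - z x) - H (z x)))
      Filter.atTop (nhds 0) := by
  obtain ⟨M₀, hM₀⟩ := hbdd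
  have hp0 : (0:ℝ) < p := lt_of_lt_of_le one_pos hp
  have hp1 : (0:ℝ) < p + 1 := by linarith
  set q : ℝ := (p + 1) / p with hqdef
  have hq : Real.HolderConjugate q (p + 1) := by
    rw [Real.holderConjugate_iff]
    constructor
    · rw [hqdef, lt_div_iff₀ hp0]; linarith
    · rw [hqdef]; field_simp
  have hq1 : 0 < q := hq.pos
  have hpq : p * q = p + 1 := by rw [hqdef]; field_simp
  have hne0 : ENNReal.ofReal (p + 1) ≠ 0 := by
    simp [ENNReal.ofReal_eq_zero, not_le, hp1]
  have hneT : ENNReal.ofReal (p + 1) ≠ ⊤ := ENNReal.ofReal_ne_top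
  have hqne0 : ENNReal.ofReal q ≠ 0 := by
    simp [ENNReal.ofReal_eq_zero, not_le, hq1]
  have Hcont : Continuous H := bl_contH hp0 hH
  -- x^p * x = x^(p+1) for x ≥ 0
  have hrp : ∀ x : ℝ, 0 ≤ x → x ^ p * x = x ^ (p + 1) := by
    intro x hx
    rw [Real.rpow_add_one' hx (by positivity)]
  -- integrability of |f|^(p+1)
  have habs : ∀ f : EuclideanSpace ℝ (Fin n) → ℝ, MemLp f (ENNReal.ofReal (p + 1)) volume →
      Integrable (fun x => |f x| ^ (p + 1)) volume := by
    intro f hf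
    have h := hf.integrable_norm_rpow hne0 hneT
    rw [ENNReal.toReal_ofReal hp1.le] at h
    simpa [Real.norm_eq_abs] using h
  -- MemLp of |f|^p in L^q
  have hmemq : ∀ f : EuclideanSpace ℝ (Fin n) → ℝ, MemLp f (ENNReal.ofReal (p + 1)) volume →
      MemLp (fun x => |f x| ^ p) (ENNReal.ofReal q) volume := by
    intro f hf
    have h := hf.norm_rpow_div (ENNReal.ofReal p)
    rw [ENNReal.toReal_ofReal hp0.le, ← ENNReal.ofReal_div_of_pos hp0] at h
    simpa [Real.norm_eq_abs, hqdef] using h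
  -- integrability of H ∘ f
  have hHint : ∀ f : EuclideanSpace ℝ (Fin n) → ℝ, MemLp f (ENNReal.ofReal (p + 1)) volume →
      Integrable (fun x => H (f x)) volume := by
    intro f hf
    refine Integrable.mono' ((habs f hf).const_mul C)
      (Hcont.comp_aestronglyMeasurable hf.1) (Eventually.of_forall fun x => ?_)
    have h0 := hH (f x) 0
    rw [hH0, sub_zero, sub_zero, abs_zero, Real.zero_rpow hp0.ne', add_zero] at h0
    rw [Real.norm_eq_abs]
    calc |H (f x)| ≤ C * |f x| ^ p * |f x| := h0
      _ = C * |f x| ^ (p + 1) := by rw [mul_assoc, hrp _ (abs_nonneg _)]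
  -- product integrability (Hölder)
  have hprod : ∀ φ w : EuclideanSpace ℝ (Fin n) → ℝ, MemLp φ (ENNReal.ofReal q) volume →
      MemLp w (ENNReal.ofReal (p + 1)) volume →
      Integrable (fun x => φ x * w x) volume := by
    intro φ w hφ hw
    rw [← memLp_one_iff_integrable]
    have hpqr : (1:ℝ≥0∞) / 1 = 1 / ENNReal.ofReal q + 1 / ENNReal.ofReal (p + 1) := by
      rw [one_div, one_div, one_div, ← ENNReal.ofReal_inv_of_pos hq1,
        ← ENNReal.ofReal_inv_of_pos hp1, ← ENNReal.ofReal_add (by positivity) (by positivity)]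
      have : q⁻¹ + (p + 1)⁻¹ = 1 := hq.inv_add_inv_eq_one
      rw [this, ENNReal.ofReal_one, inv_one]
    haveI : ENNReal.HolderTriple (ENNReal.ofReal q) (ENNReal.ofReal (p + 1)) 1 :=
      ⟨by rw [one_div, one_div, one_div] at hpqr; exact hpqr.symm⟩
    have := MemLp.smul (f := w) (φ := φ) (r := 1) hw hφ
    exact this
  -- constants
  set M : ℝ := max M₀ 0 with hMdef
  have hM0 : 0 ≤ M := le_max_right _ _
  have hIzk : ∀ k, (∫ x, |zk k x| ^ (p + 1)) ≤ M ^ (p + 1) := by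
    intro k
    have h1 : 0 ≤ ∫ x, |zk k x| ^ (p + 1) := integral_nonneg fun x => by positivity
    have h2 : ((∫ x, |zk k x| ^ (p + 1)) ^ (1 / (p + 1))) ^ (p + 1) ≤ M ^ (p + 1) :=
      Real.rpow_le_rpow (Real.rpow_nonneg h1 _) ((hM₀ k).trans (le_max_left _ _)) hp1.le
    rwa [one_div, Real.rpow_inv_rpow h1 hp1.ne'] at h2
  set Iz : ℝ := ∫ x, |z x| ^ (p + 1) with hIzdef
  have hIz0 : 0 ≤ Iz := integral_nonneg fun x => by positivity
  set B : ℝ := 2 ^ q * (M ^ (p + 1) + Iz) with hBdef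
  have hB0 : 0 ≤ B := mul_nonneg (Real.rpow_nonneg (by norm_num) _)
    (add_nonneg (Real.rpow_nonneg hM0 _) hIz0)
  have hfmem : ∀ k, MemLp (fun x => |zk k x| ^ p + |z x| ^ p) (ENNReal.ofReal q) volume :=
    fun k => (hmemq _ (hzk k)).add (hmemq _ hz)
  have hfint : ∀ k, Integrable (fun x => (|zk k x| ^ p + |z x| ^ p) ^ q) volume := by
    intro k
    have h := (hfmem k).integrable_norm_rpow hqne0 ENNReal.ofReal_ne_top
    have heq : (fun x => ‖|zk k x| ^ p + |z x| ^ p‖ ^ (ENNReal.ofReal q).toReal)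
        = fun x => (|zk k x| ^ p + |z x| ^ p) ^ q := by
      funext x
      rw [ENNReal.toReal_ofReal hq1.le, Real.norm_of_nonneg (by positivity)]
    rwa [heq] at h
  have hfq_bound : ∀ k, (∫ x, (|zk k x| ^ p + |z x| ^ p) ^ q) ≤ B := by
    intro k
    have hpt : ∀ x, (|zk k x| ^ p + |z x| ^ p) ^ q
        ≤ 2 ^ q * (|zk k x| ^ (p + 1) + |z x| ^ (p + 1)) := by
      intro x
      have h := bl_rpow_add (a := |zk k x| ^ p) (b := |z x| ^ p)
        (by positivity) (by positivity) hq1.le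
      calc (|zk k x| ^ p + |z x| ^ p) ^ q
          ≤ 2 ^ q * ((|zk k x| ^ p) ^ q + (|z x| ^ p) ^ q) := h
        _ = 2 ^ q * (|zk k x| ^ (p + 1) + |z x| ^ (p + 1)) := by
            rw [← Real.rpow_mul (abs_nonneg _), ← Real.rpow_mul (abs_nonneg _), hpq]
    calc (∫ x, (|zk k x| ^ p + |z x| ^ p) ^ q)
        ≤ ∫ x, 2 ^ q * (|zk k x| ^ (p + 1) + |z x| ^ (p + 1)) :=
          integral_mono (hfint k) (((habs _ (hzk k)).add (habs _ hz)).const_mul _) hpt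
      _ = 2 ^ q * ((∫ x, |zk k x| ^ (p + 1)) + Iz) := by
          rw [MeasureTheory.integral_const_mul, integral_add (habs _ (hzk k)) (habs _ hz)]
      _ ≤ B := by
          have h3 := hIzk k
          have h2 : (0:ℝ) ≤ (2:ℝ) ^ q := Real.rpow_nonneg (by norm_num) _
          rw [hBdef]
          nlinarith
  have holder : ∀ (k : ℕ) (S : Set (EuclideanSpace ℝ (Fin n)))
      (w : EuclideanSpace ℝ (Fin n) → ℝ), MemLp w (ENNReal.ofReal (p + 1)) volume →
      (∫ x in S, (|zk k x| ^ p + |z x| ^ p) * |w x|)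
        ≤ B ^ (1 / q) * (∫ x in S, |w x| ^ (p + 1)) ^ (1 / (p + 1)) := by
    intro k S w hw
    have hwmem : MemLp (fun x => |w x|) (ENNReal.ofReal (p + 1)) (volume.restrict S) := by
      have := (hw.restrict S).norm
      simpa [Real.norm_eq_abs] using this
    have h := integral_mul_le_Lp_mul_Lq_of_nonneg (μ := volume.restrict S) hq
      (f := fun x => |zk k x| ^ p + |z x| ^ p) (g := fun x => |w x|)
      (Eventually.of_forall fun x => by positivity)
      (Eventually.of_forall fun x => abs_nonneg _)
      ((hfmem k).restrict S) hwmem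
    refine h.trans ?_
    have h1 : (∫ x in S, (|zk k x| ^ p + |z x| ^ p) ^ q) ≤ B :=
      le_trans (setIntegral_le_integral (hfint k)
        (Eventually.of_forall fun x => by positivity)) (hfq_bound k)
    have h2 : (∫ x in S, (|zk k x| ^ p + |z x| ^ p) ^ q) ^ (1/q) ≤ B ^ (1/q) :=
      Real.rpow_le_rpow (integral_nonneg fun x => by positivity) h1 (by positivity)
    exact mul_le_mul_of_nonneg_right h2
      (Real.rpow_nonneg (integral_nonneg fun x => by positivity) _)
  have habsm : ∀ w : EuclideanSpace ℝ (Fin n) → ℝ, MemLp w (ENNReal.ofReal (p + 1)) volume →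
      MemLp (fun x => |w x|) (ENNReal.ofReal (p + 1)) volume := by
    intro w hw
    simpa [Real.norm_eq_abs] using hw.norm
  -- pointwise bounds
  have hg1 : ∀ k x, |H (zk k x) - H (zk k x - z x) - H (z x)|
      ≤ C * (1 + 2 ^ p) * ((|zk k x| ^ p + |z x| ^ p) * |z x|) := by
    intro k x
    have e1 : H (zk k x) - H (zk k x - z x) - H (z x)
        = (H (zk k x) - H (zk k x - z x)) - (H (z x) - H 0) := by rw [hH0]; ring
    have b1 := hH (zk k x) (zk k x - z x)
    have b2 := hH (z x) 0
    rw [sub_zero, abs_zero, Real.zero_rpow hp0.ne', add_zero] at b2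
    have hsub : zk k x - (zk k x - z x) = z x := by ring
    rw [hsub] at b1
    have hnup : |zk k x - z x| ^ p ≤ 2 ^ p * (|zk k x| ^ p + |z x| ^ p) := by
      calc |zk k x - z x| ^ p ≤ (|zk k x| + |z x|) ^ p :=
            Real.rpow_le_rpow (abs_nonneg _) (abs_sub _ _) hp0.le
        _ ≤ 2 ^ p * (|zk k x| ^ p + |z x| ^ p) :=
            bl_rpow_add (abs_nonneg _) (abs_nonneg _) hp0.le
    have key : C * |z x| * (|zk k x - z x| ^ p) ≤ C * |z x| * (2 ^ p * (|zk k x| ^ p + |z x| ^ p)) :=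
      mul_le_mul_of_nonneg_left hnup (mul_nonneg hC.le (abs_nonneg _))
    calc |H (zk k x) - H (zk k x - z x) - H (z x)|
        ≤ |H (zk k x) - H (zk k x - z x)| + |H (z x) - H 0| := by rw [e1]; exact abs_sub _ _
      _ ≤ C * (|zk k x| ^ p + |zk k x - z x| ^ p) * |z x| + C * (|z x| ^ p) * |z x| :=
          add_le_add b1 b2
      _ ≤ C * (1 + 2 ^ p) * ((|zk k x| ^ p + |z x| ^ p) * |z x|) := by nlinarith
  have hg2 : ∀ k x, |H (zk k x) - H (zk k x - z x) - H (z x)|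
      ≤ C * ((|zk k x| ^ p + |z x| ^ p) * |zk k x - z x|) + C * |zk k x - z x| ^ (p + 1) := by
    intro k x
    have e2 : H (zk k x) - H (zk k x - z x) - H (z x)
        = (H (zk k x) - H (z x)) - (H (zk k x - z x) - H 0) := by rw [hH0]; ring
    have b1 := hH (zk k x) (z x)
    have b2 := hH (zk k x - z x) 0
    rw [sub_zero, abs_zero, Real.zero_rpow hp0.ne', add_zero] at b2
    calc |H (zk k x) - H (zk k x - z x) - H (z x)|
        ≤ |H (zk k x) - H (z x)| + |H (zk k x - z x) - H 0| := by rw [e2]; exact abs_sub _ _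
      _ ≤ C * (|zk k x| ^ p + |z x| ^ p) * |zk k x - z x|
          + C * (|zk k x - z x| ^ p) * |zk k x - z x| := add_le_add b1 b2
      _ = C * ((|zk k x| ^ p + |z x| ^ p) * |zk k x - z x|) + C * |zk k x - z x| ^ (p + 1) := by
          rw [mul_assoc C, mul_assoc C, hrp _ (abs_nonneg _)]
  have hnu : ∀ k, MemLp (fun x => zk k x - z x) (ENNReal.ofReal (p + 1)) volume :=
    fun k => (hzk k).sub hz
  have hgint : ∀ k, Integrable (fun x => H (zk k x) - H (zk k x - z x) - H (z x)) volume :=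
    fun k => ((hHint _ (hzk k)).sub (hHint _ (hnu k))).sub (hHint _ hz)
  rw [NormedAddCommGroup.tendsto_nhds_zero]
  intro ε hε
  have h2p : (0:ℝ) ≤ 2 ^ p := Real.rpow_nonneg (by norm_num) _
  have hB1q : (0:ℝ) ≤ B ^ (1/q) := Real.rpow_nonneg hB0 _
  set D1 : ℝ := C * (1 + 2 ^ p) * B ^ (1/q) + 1 with hD1def
  set D2 : ℝ := C * B ^ (1/q) + 1 with hD2def
  have hD1 : 0 < D1 := by
    have h : 0 ≤ C * (1 + 2 ^ p) * B ^ (1/q) :=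
      mul_nonneg (mul_nonneg hC.le (by linarith)) hB1q
    rw [hD1def]; linarith
  have hD2 : 0 < D2 := by
    have h : 0 ≤ C * B ^ (1/q) := mul_nonneg hC.le hB1q
    rw [hD2def]; linarith
  set δ1 : ℝ := (ε / (4 * D1)) ^ (p + 1) with hδ1def
  set δ2 : ℝ := (ε / (4 * D2)) ^ (p + 1) with hδ2def
  set δ3 : ℝ := ε / (4 * C) with hδ3def
  have hδ1 : 0 < δ1 := Real.rpow_pos_of_pos (by positivity) _
  have hδ2 : 0 < δ2 := Real.rpow_pos_of_pos (by positivity) _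
  have hδ3 : 0 < δ3 := by positivity
  -- choose the ball K
  have hzint := habs z hz
  have hU : (⋃ m : ℕ, Metric.closedBall (0 : EuclideanSpace ℝ (Fin n)) m) = Set.univ := by
    rw [Set.iUnion_eq_univ_iff]
    intro x
    obtain ⟨m, hm⟩ := exists_nat_ge ‖x‖
    exact ⟨m, by simpa [Metric.mem_closedBall, dist_zero_right] using hm⟩
  have hmono := tendsto_setIntegral_of_monotone (μ := volume)
    (s := fun m : ℕ => Metric.closedBall (0 : EuclideanSpace ℝ (Fin n)) m)
    (f := fun x => |z x| ^ (p + 1))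
    (fun m => measurableSet_closedBall)
    (fun a b hab => Metric.closedBall_subset_closedBall (by exact_mod_cast hab))
    (by rw [hU]; exact hzint.integrableOn)
  rw [hU, setIntegral_univ] at hmono
  have hev1 : ∀ᶠ m in atTop,
      Iz - δ1 < ∫ x in Metric.closedBall (0 : EuclideanSpace ℝ (Fin n)) (m : ℕ), |z x| ^ (p + 1) :=
    hmono.eventually (eventually_gt_nhds (by linarith))
  obtain ⟨m, hm⟩ := hev1.exists
  set K : Set (EuclideanSpace ℝ (Fin n)) := Metric.closedBall 0 m with hKdef
  have hKmeas : MeasurableSet K := measurableSet_closedBall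
  have hKc : (∫ x in Kᶜ, |z x| ^ (p + 1)) ≤ δ1 := by
    have hsp := integral_add_compl hKmeas hzint
    have : Iz - δ1 < ∫ x in K, |z x| ^ (p + 1) := hm
    linarith [hsp]
  have hKcpt : IsCompact K := isCompact_closedBall _ _
  have hev2 : ∀ᶠ k in atTop, (∫ x in K, |zk k x - z x| ^ (p + 1)) < min δ2 δ3 :=
    (hloc K hKcpt).eventually_lt_const (lt_min hδ2 hδ3)
  filter_upwards [hev2] with k hk
  have hεK0 : 0 ≤ ∫ x in K, |zk k x - z x| ^ (p + 1) :=
    setIntegral_nonneg hKmeas fun x _ => by positivity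
  have hint1 : Integrable (fun x => (|zk k x| ^ p + |z x| ^ p) * |zk k x - z x|) volume :=
    hprod _ _ (hfmem k) (habsm _ (hnu k))
  have hint2 : Integrable (fun x => |zk k x - z x| ^ (p + 1)) volume := habs _ (hnu k)
  have hint3 : Integrable (fun x => (|zk k x| ^ p + |z x| ^ p) * |z x|) volume :=
    hprod _ _ (hfmem k) (habsm _ hz)
  -- estimate on K
  have hKpart : ‖∫ x in K, (H (zk k x) - H (zk k x - z x) - H (z x))‖ ≤ ε / 4 + ε / 4 := by
    have step1 : ‖∫ x in K, (H (zk k x) - H (zk k x - z x) - H (z x))‖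
        ≤ ∫ x in K, |H (zk k x) - H (zk k x - z x) - H (z x)| := by
      simpa [Real.norm_eq_abs] using
        norm_integral_le_integral_norm (μ := volume.restrict K)
          (fun x => H (zk k x) - H (zk k x - z x) - H (z x))
    refine step1.trans ?_
    have step2 : (∫ x in K, |H (zk k x) - H (zk k x - z x) - H (z x)|)
        ≤ ∫ x in K, (C * ((|zk k x| ^ p + |z x| ^ p) * |zk k x - z x|)
            + C * |zk k x - z x| ^ (p + 1)) :=
      integral_mono ((hgint k).abs.restrict)
        (((hint1.const_mul C).add (hint2.const_mul C)).restrict) (fun x => hg2 k x)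
    refine step2.trans ?_
    have step3 : (∫ x in K, (C * ((|zk k x| ^ p + |z x| ^ p) * |zk k x - z x|)
            + C * |zk k x - z x| ^ (p + 1)))
        = C * (∫ x in K, (|zk k x| ^ p + |z x| ^ p) * |zk k x - z x|)
          + C * ∫ x in K, |zk k x - z x| ^ (p + 1) := by
      rw [integral_add ((hint1.const_mul C).restrict) ((hint2.const_mul C).restrict),
        integral_const_mul, integral_const_mul]
    rw [step3]
    have hr : (∫ x in K, |zk k x - z x| ^ (p + 1)) ^ (1 / (p + 1)) ≤ ε / (4 * D2) := by
      have h := Real.rpow_le_rpow hεK0 (le_of_lt (lt_of_lt_of_le hk (min_le_left _ _)))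
        (by positivity : (0:ℝ) ≤ 1 / (p + 1))
      rw [hδ2def, one_div, Real.rpow_rpow_inv (by positivity) hp1.ne'] at h
      rwa [one_div]
    have hterm1 : C * (∫ x in K, (|zk k x| ^ p + |z x| ^ p) * |zk k x - z x|) ≤ ε / 4 := by
      calc C * (∫ x in K, (|zk k x| ^ p + |z x| ^ p) * |zk k x - z x|)
          ≤ C * (B ^ (1/q) * (∫ x in K, |zk k x - z x| ^ (p + 1)) ^ (1 / (p + 1))) :=
            mul_le_mul_of_nonneg_left (holder k K _ (hnu k)) hC.le
        _ ≤ C * (B ^ (1/q) * (ε / (4 * D2))) := by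
            refine mul_le_mul_of_nonneg_left (mul_le_mul_of_nonneg_left hr hB1q) hC.le
        _ = (C * B ^ (1/q)) * (ε / (4 * (C * B ^ (1/q) + 1))) := by rw [hD2def]; ring
        _ ≤ ε / 4 := bl_frac (mul_nonneg hC.le hB1q) hε
    have hterm2 : C * (∫ x in K, |zk k x - z x| ^ (p + 1)) ≤ ε / 4 := by
      have h3 : (∫ x in K, |zk k x - z x| ^ (p + 1)) ≤ δ3 :=
        le_of_lt (lt_of_lt_of_le hk (min_le_right _ _))
      calc C * (∫ x in K, |zk k x - z x| ^ (p + 1)) ≤ C * δ3 :=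
            mul_le_mul_of_nonneg_left h3 hC.le
        _ = ε / 4 := by rw [hδ3def]; field_simp
    linarith
  -- estimate on Kᶜ
  have hKcpart : ‖∫ x in Kᶜ, (H (zk k x) - H (zk k x - z x) - H (z x))‖ ≤ ε / 4 := by
    have step1 : ‖∫ x in Kᶜ, (H (zk k x) - H (zk k x - z x) - H (z x))‖
        ≤ ∫ x in Kᶜ, |H (zk k x) - H (zk k x - z x) - H (z x)| := by
      simpa [Real.norm_eq_abs] using
        norm_integral_le_integral_norm (μ := volume.restrict Kᶜ)
          (fun x => H (zk k x) - H (zk k x - z x) - H (z x))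
    refine step1.trans ?_
    have step2 : (∫ x in Kᶜ, |H (zk k x) - H (zk k x - z x) - H (z x)|)
        ≤ ∫ x in Kᶜ, C * (1 + 2 ^ p) * ((|zk k x| ^ p + |z x| ^ p) * |z x|) :=
      integral_mono ((hgint k).abs.restrict)
        ((hint3.const_mul (C * (1 + 2 ^ p))).restrict) (fun x => hg1 k x)
    refine step2.trans ?_
    rw [integral_const_mul]
    have hr : (∫ x in Kᶜ, |z x| ^ (p + 1)) ^ (1 / (p + 1)) ≤ ε / (4 * D1) := by
      have h0 : 0 ≤ ∫ x in Kᶜ, |z x| ^ (p + 1) :=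
        setIntegral_nonneg hKmeas.compl fun x _ => by positivity
      have h := Real.rpow_le_rpow h0 hKc (by positivity : (0:ℝ) ≤ 1 / (p + 1))
      rw [hδ1def, one_div, Real.rpow_rpow_inv (by positivity) hp1.ne'] at h
      rwa [one_div]
    calc C * (1 + 2 ^ p) * (∫ x in Kᶜ, (|zk k x| ^ p + |z x| ^ p) * |z x|)
        ≤ C * (1 + 2 ^ p) * (B ^ (1/q) * (∫ x in Kᶜ, |z x| ^ (p + 1)) ^ (1 / (p + 1))) :=
          mul_le_mul_of_nonneg_left (holder k Kᶜ z hz) (mul_nonneg hC.le (by linarith))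
      _ ≤ C * (1 + 2 ^ p) * (B ^ (1/q) * (ε / (4 * D1))) := by
          refine mul_le_mul_of_nonneg_left (mul_le_mul_of_nonneg_left hr hB1q)
            (mul_nonneg hC.le (by linarith))
      _ = (C * (1 + 2 ^ p) * B ^ (1/q)) * (ε / (4 * (C * (1 + 2 ^ p) * B ^ (1/q) + 1))) := by
          rw [hD1def]; ring
      _ ≤ ε / 4 := bl_frac (mul_nonneg (mul_nonneg hC.le (by linarith)) hB1q) hε
  have hsplit : (∫ x, (H (zk k x) - H (zk k x - z x) - H (z x)))
      = (∫ x in K, (H (zk k x) - H (zk k x - z x) - H (z x)))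
        + ∫ x in Kᶜ, (H (zk k x) - H (zk k x - z x) - H (z x)) :=
    (integral_add_compl hKmeas (hgint k)).symm
  calc ‖∫ x, (H (zk k x) - H (zk k x - z x) - H (z x))‖
      = ‖(∫ x in K, (H (zk k x) - H (zk k x - z x) - H (z x)))
        + ∫ x in Kᶜ, (H (zk k x) - H (zk k x - z x) - H (z x))‖ := by rw [hsplit]
    _ ≤ ‖∫ x in K, (H (zk k x) - H (zk k x - z x) - H (z x))‖
        + ‖∫ x in Kᶜ, (H (zk k x) - H (zk k x - z x) - H (z x))‖ := norm_add_le _ _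
    _ ≤ (ε / 4 + ε / 4) + ε / 4 := add_le_add hKpart hKcpart
    _ < ε := by linarith
end
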